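/- A k-ary regular operation is 1-uniform if and only if it equals the operation induced by some coherent modifier. -/

import Mathlib

/-- A `k`-ary regular operation is 1-uniform if it commutes with preimages of
1-uniform (letter-to-letter) morphisms on tuples of regular languages. -/
def IsOneUniform (k : ℕ) (op : ∀ α : Type, (Fin k → Language α) → Language α) : Prop :=
  ∀ (α β : Type) (φ : α → β) (L : Fin k → Language β), (∀ i, (L i).IsRegular) →
    op α (fun i => {w : List α | w.map φ ∈ L i}) = {w : List α | w.map φ ∈ op β L}

/-- A state configuration: a set of states with an initial state and a set of
final states. -/
structure StateConfig where
  Q : Type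
  init : Q
  final : Set Q

/-- A `k`-ary modifier: an operation on transition configurations
`(Q, i, F, δ)` such that the state configuration of the output depends only on
the state configurations of the inputs (this is built into the data: `out`
depends only on the state configurations, and only the output transition
function `step` depends on the input transition functions). -/
structure Modifier (k : ℕ) where
  out : (Fin k → StateConfig) → StateConfig
  step : ∀ c : Fin k → StateConfig, (∀ i, (c i).Q → (c i).Q) → ((out c).Q → (out c).Q)

/-- The `i`-th input DFA determined by state configurations `c` and letterwise
transition functions `δ`. -/
def inputDFA {k : ℕ} (c : Fin k → StateConfig) {α : Type}
    (δ : ∀ i, α → ((c i).Q → (c i).Q)) (i : Fin k) : DFA α (c i).Q :=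
  ⟨fun q a => δ i a q, (c i).init, (c i).final⟩

/-- Applying a modifier to a `k`-tuple of DFAs, letter by letter. -/
def Modifier.apply {k : ℕ} (M : Modifier k) (c : Fin k → StateConfig) {α : Type}
    (δ : ∀ i, α → ((c i).Q → (c i).Q)) : DFA α (M.out c).Q :=
  ⟨fun q a => M.step c (fun i => δ i a) q, (M.out c).init, (M.out c).final⟩

/-- A modifier is coherent if the language of the output automaton depends only
on the languages of the input automata. -/
def Modifier.Coherent {k : ℕ} (M : Modifier k) : Prop :=
  ∀ (α : Type) (c c' : Fin k → StateConfig)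
    (δ : ∀ i, α → ((c i).Q → (c i).Q)) (δ' : ∀ i, α → ((c' i).Q → (c' i).Q)),
    (∀ i, Finite (c i).Q) → (∀ i, Finite (c' i).Q) →
    (∀ i, (inputDFA c δ i).accepts = (inputDFA c' δ' i).accepts) →
    (M.apply c δ).accepts = (M.apply c' δ').accepts

section Aux

/-- Evaluation commutes with letterwise translation of the alphabet. -/
lemma dfa_evalFrom_map {α β σ : Type} (D : DFA α σ) (D' : DFA β σ) (φ : α → β)
    (h : ∀ q a, D.step q a = D'.step q (φ a)) (q : σ) (w : List α) :
    D.evalFrom q w = D'.evalFrom q (w.map φ) := by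
  simp only [DFA.evalFrom, List.foldl_map]
  congr 1
  funext q a
  exact h q a

lemma dfa_accepts_map {α β σ : Type} (D : DFA α σ) (D' : DFA β σ) (φ : α → β)
    (h : ∀ q a, D.step q a = D'.step q (φ a)) (hs : D.start = D'.start)
    (ha : D.accept = D'.accept) :
    D.accepts = {w : List α | w.map φ ∈ D'.accepts} := by
  ext w
  simp only [DFA.mem_accepts, Set.mem_setOf_eq, DFA.eval]
  rw [dfa_evalFrom_map D D' φ h, hs, ha]
  exact Iff.rfl

/-- The derivative automaton on languages recognizes its initial language. -/
lemma deriv_evalFrom {β : Type} (D : DFA β (Language β))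
    (hstep : ∀ (L : Language β) a, D.step L a = {w | a :: w ∈ L}) :
    ∀ (w : List β) (L : Language β), D.evalFrom L w = {v | w ++ v ∈ L} := by
  intro w
  induction w with
  | nil => intro L; simp [DFA.evalFrom]; rfl
  | cons a w ih =>
    intro L
    show D.evalFrom (D.step L a) w = _
    rw [ih, hstep]
    ext v
    show a :: w ++ v ∈ L ↔ a :: (w ++ v) ∈ L
    rw [List.cons_append]

lemma deriv_accepts {β : Type} (D : DFA β (Language β))
    (hstep : ∀ (L : Language β) a, D.step L a = {w | a :: w ∈ L})
    (haccept : D.accept = {L | [] ∈ L}) :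
    D.accepts = D.start := by
  ext w
  rw [DFA.mem_accepts, DFA.eval, deriv_evalFrom D hstep, haccept]
  show w ++ [] ∈ D.start ↔ w ∈ D.start
  rw [List.append_nil]

end Aux

namespace OneUniformProof

variable {k : ℕ}

/-- The universal alphabet for a tuple of state configurations. -/
abbrev uAlph (c : Fin k → StateConfig) : Type := ∀ i, (c i).Q → (c i).Q

/-- Letterwise transitions over the universal alphabet. -/
def uDelta (c : Fin k → StateConfig) : ∀ i, uAlph c → ((c i).Q → (c i).Q) :=
  fun i a => a i

/-- The modifier canonically associated to an operation `op`. -/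
def theMod (k : ℕ) (op : ∀ α : Type, (Fin k → Language α) → Language α) : Modifier k where
  out c := ⟨Language (uAlph c),
    op (uAlph c) (fun i => (inputDFA c (uDelta c) i).accepts),
    {L : Language (uAlph c) | [] ∈ L}⟩
  step c a L := {w | (a :: w : List (uAlph c)) ∈ L}

lemma theMod_key (k : ℕ) (op : ∀ α : Type, (Fin k → Language α) → Language α)
    (h1 : IsOneUniform k op)
    (α : Type) (c : Fin k → StateConfig) (δ : ∀ i, α → ((c i).Q → (c i).Q))
    (hfin : ∀ i, Finite (c i).Q) :
    op α (fun i => (inputDFA c δ i).accepts) = ((theMod k op).apply c δ).accepts := by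
  set ψ : α → uAlph c := fun a i => δ i a with hψ
  have hU : ∀ i, ((inputDFA c (uDelta c) i).accepts).IsRegular := by
    intro i
    exact ⟨(c i).Q, Fintype.ofFinite _, inputDFA c (uDelta c) i, rfl⟩
  have key := h1 α (uAlph c) ψ (fun i => (inputDFA c (uDelta c) i).accepts) hU
  have hin : (fun i => {w : List α | w.map ψ ∈ (inputDFA c (uDelta c) i).accepts})
      = fun i => (inputDFA c δ i).accepts := by
    funext i
    exact (dfa_accepts_map (inputDFA c δ i) (inputDFA c (uDelta c) i) ψ
      (fun q a => rfl) rfl rfl).symm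
  rw [hin] at key
  rw [key]
  have hout : ((theMod k op).apply c δ).accepts
      = {w : List α | w.map ψ ∈
          op (uAlph c) (fun i => (inputDFA c (uDelta c) i).accepts)} := by
    have hD : (DFA.mk (fun (L : Language (uAlph c)) a => {w | a :: w ∈ L})
        (op (uAlph c) (fun i => (inputDFA c (uDelta c) i).accepts))
        {L : Language (uAlph c) | [] ∈ L}).accepts
        = op (uAlph c) (fun i => (inputDFA c (uDelta c) i).accepts) :=
      deriv_accepts _ (fun L a => rfl) rfl
    rw [← hD]
    exact dfa_accepts_map _ _ ψ (fun q a => rfl) rfl rfl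
  exact hout.symm

end OneUniformProof

/-- A `k`-ary regular operation is 1-uniform if and only if it is the operation
induced by some coherent modifier. -/
theorem isOneUniform_iff_coherent_modifier (k : ℕ)
    (op : ∀ α : Type, (Fin k → Language α) → Language α)
    (hreg : ∀ (α : Type) (L : Fin k → Language α),
      (∀ i, (L i).IsRegular) → (op α L).IsRegular) :
    IsOneUniform k op ↔
      ∃ M : Modifier k, M.Coherent ∧
        ∀ (α : Type) (c : Fin k → StateConfig) (δ : ∀ i, α → ((c i).Q → (c i).Q)),
          (∀ i, Finite (c i).Q) →
          op α (fun i => (inputDFA c δ i).accepts) = (M.apply c δ).accepts := by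
  
  constructor
  · intro h1
    refine ⟨OneUniformProof.theMod k op, ?_, ?_⟩
    · intro α c c' δ δ' hfin hfin' hacc
      rw [← OneUniformProof.theMod_key k op h1 α c δ hfin,
        ← OneUniformProof.theMod_key k op h1 α c' δ' hfin']
      have : (fun i => (inputDFA c δ i).accepts) = fun i => (inputDFA c' δ' i).accepts :=
        funext hacc
      rw [this]
    · intro α c δ hfin
      exact OneUniformProof.theMod_key k op h1 α c δ hfin
  · rintro ⟨M, _hcoh, hM⟩
    intro α β φ L hLreg
    choose σ hfty B hB using hLreg
    set c : Fin k → StateConfig := fun i => ⟨σ i, (B i).start, (B i).accept⟩ with hc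
    have hfin : ∀ i, Finite (c i).Q := fun i => @Finite.of_fintype _ (hfty i)
    set δβ : ∀ i, β → ((c i).Q → (c i).Q) := fun i b q => (B i).step q b with hδβ
    set δα : ∀ i, α → ((c i).Q → (c i).Q) := fun i a q => (B i).step q (φ a) with hδα
    have hBeq : ∀ i, (inputDFA c δβ i).accepts = L i := by
      intro i
      rw [← hB i]
      rfl
    have hAeq : ∀ i, (inputDFA c δα i).accepts = {w : List α | w.map φ ∈ L i} := by
      intro i
      rw [← hBeq i]
      exact dfa_accepts_map _ _ φ (fun q a => rfl) rfl rfl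
    have h1 := hM α c δα hfin
    have h2 := hM β c δβ hfin
    have h3 : (M.apply c δα).accepts = {w : List α | w.map φ ∈ (M.apply c δβ).accepts} :=
      dfa_accepts_map _ _ φ (fun q a => rfl) rfl rfl
    calc op α (fun i => {w : List α | w.map φ ∈ L i})
        = op α (fun i => (inputDFA c δα i).accepts) := by
          have : (fun i => {w : List α | w.map φ ∈ L i})
              = fun i => (inputDFA c δα i).accepts := funext fun i => (hAeq i).symm
          rw [this]
      _ = (M.apply c δα).accepts := h1
      _ = @id (Language α) {w : List α | w.map φ ∈ (M.apply c δβ).accepts} := h3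
      _ = @id (Language α) {w : List α | w.map φ ∈ op β (fun i => (inputDFA c δβ i).accepts)} := by rw [h2]
      _ = @id (Language α) {w : List α | w.map φ ∈ op β L} := by
          have : (fun i => (inputDFA c δβ i).accepts) = L := funext hBeq
          rw [this]
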